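/- arXiv:2112.08257 — 2 statements merged into one kernel-verified Lean document; each statement's English description precedes it below -/
import Mathlib

section
/- The number of strictly increasing integer sequences 0 ≤ n_1 < n_2 < ... < n_{2k-1} ≤ N-1 whose alternating sum n_{2k-1} - n_{2k-2} + n_{2k-3} - ... - n_2 + n_1 equals l is the product of binomial coefficients C(l, k-1) · C(N-l-1, k-1). -/
open Finset

/-- Alternating partial sum. -/
def Sa (w : ℕ → ℕ) (t : ℕ) : ℤ := ∑ j ∈ Finset.range t, (-1 : ℤ) ^ j * (w j : ℤ)

lemma Sa_zero (w : ℕ → ℕ) : Sa w 0 = 0 := by simp [Sa]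

lemma Sa_even (w : ℕ → ℕ) (i : ℕ) : Sa w (2*i+1) = Sa w (2*i) + w (2*i) := by
  rw [Sa, Finset.sum_range_succ]
  have : (-1 : ℤ) ^ (2*i) = 1 := Even.neg_one_pow ⟨i, by ring⟩
  rw [this]; simp only [Sa]; ring

lemma Sa_odd (w : ℕ → ℕ) (i : ℕ) : Sa w (2*i+2) = Sa w (2*i+1) - w (2*i+1) := by
  rw [show 2*i+2 = (2*i+1)+1 from rfl, Sa, Finset.sum_range_succ]
  have : (-1 : ℤ) ^ (2*i+1) = -1 := Odd.neg_one_pow ⟨i, by ring⟩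
  rw [this]; simp only [Sa]; ring

lemma altsum (G H : ℕ → ℤ) (m : ℕ) :
    ∑ j ∈ Finset.range (2*m+1), (-1 : ℤ) ^ j * (G (j/2) + H ((j+1)/2)) = G m + H 0 := by
  induction m with
  | zero => simp
  | succ n ih =>
    have h1 : 2*(n+1)+1 = (2*n+1) + 1 + 1 := by ring
    rw [h1, Finset.sum_range_succ, Finset.sum_range_succ, ih]
    have e1 : (2*n+1)/2 = n := by omega
    have e2 : (2*n+1+1)/2 = n+1 := by omega
    have e3 : (2*n+1+1+1)/2 = n+1 := by omega
    rw [e1, e2, e3]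
    have s1 : (-1 : ℤ) ^ (2*n+1) = -1 := Odd.neg_one_pow ⟨n, by ring⟩
    have s2 : (-1 : ℤ) ^ (2*n+1+1) = 1 := Even.neg_one_pow ⟨n+1, by ring⟩
    rw [s1, s2]; ring

lemma P_mono (w : ℕ → ℕ) (m : ℕ) (hm : ∀ j, j + 1 < 2*m+1 → w j < w (j+1)) :
    ∀ d i, i + d ≤ m → Sa w (2*i+1) + d ≤ Sa w (2*(i+d)+1) := by
  intro d
  induction d with
  | zero => intro i _; simp
  | succ e ih =>
    intro i hie
    have hih := ih i (by omega)
    set r := i + e with hr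
    have hkey : Sa w (2*(r+1)+1) = Sa w (2*r+1) - w (2*r+1) + w (2*r+2) := by
      calc Sa w (2*(r+1)+1) = Sa w (2*(r+1)) + w (2*(r+1)) := Sa_even w (r+1)
        _ = Sa w (2*r+2) + w (2*r+2) := by rw [show 2*(r+1) = 2*r+2 by ring]
        _ = Sa w (2*r+1) - w (2*r+1) + w (2*r+2) := by rw [Sa_odd w r]
    have hw : w (2*r+1) < w (2*r+2) := hm (2*r+1) (by omega)
    have e2 : i + (e+1) = r + 1 := by omega
    rw [e2, hkey]
    push_cast
    omega

lemma Q_mono (w : ℕ → ℕ) (m : ℕ) (hm : ∀ j, j + 1 < 2*m+1 → w j < w (j+1)) :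
    ∀ d i, i + d ≤ m → Sa w (2*(i+d)) + d ≤ Sa w (2*i) := by
  intro d
  induction d with
  | zero => intro i _; simp
  | succ e ih =>
    intro i hie
    have hih := ih i (by omega)
    set r := i + e with hr
    have hkey : Sa w (2*(r+1)) = Sa w (2*r) + w (2*r) - w (2*r+1) := by
      calc Sa w (2*(r+1)) = Sa w (2*r+2) := by rw [show 2*(r+1) = 2*r+2 by ring]
        _ = Sa w (2*r+1) - w (2*r+1) := Sa_odd w r
        _ = Sa w (2*r) + w (2*r) - w (2*r+1) := by rw [Sa_even w r]
    have hw : w (2*r) < w (2*r+1) := hm (2*r) (by omega)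
    have e2 : i + (e+1) = r + 1 := by omega
    rw [e2, hkey]
    push_cast
    omega

/-- Extension of a `Fin`-tuple to `ℕ`. -/
def fvf {m N : ℕ} (f : Fin (2*m+1) → Fin N) (j : ℕ) : ℕ :=
  if hj : j < 2*m+1 then (f ⟨j, hj⟩ : ℕ) else 0

lemma sum_eq_Sa {m N : ℕ} (f : Fin (2*m+1) → Fin N) :
    ∑ j : Fin (2*m+1), (-1 : ℤ) ^ (j : ℕ) * ((f j : ℕ) : ℤ) = Sa (fvf f) (2*m+1) := by
  rw [Sa, ← Fin.sum_univ_eq_sum_range (fun t => (-1 : ℤ) ^ t * (fvf f t : ℤ)) (2*m+1)]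
  refine Finset.sum_congr rfl fun j _ => ?_
  have : fvf f (j : ℕ) = (f j : ℕ) := by simp [fvf, j.isLt]
  rw [this]

lemma fvf_mono {m N : ℕ} {f : Fin (2*m+1) → Fin N} (hf : StrictMono f) :
    ∀ j, j + 1 < 2*m+1 → fvf f j < fvf f (j+1) := by
  intro j hj
  simp only [fvf, dif_pos hj, dif_pos (by omega : j < 2*m+1)]
  exact hf (by simp [Fin.lt_def])

section KeyFacts

variable {m N l : ℕ} {f : Fin (2*m+1) → Fin N}

lemma Sa_odd_lb (hf : StrictMono f) (i : ℕ) (hi : i ≤ m) : (i : ℤ) ≤ Sa (fvf f) (2*i+1) := by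
  have := P_mono (fvf f) m (fvf_mono hf) i 0 (by omega)
  simp only [Nat.zero_add] at this
  have h1 : Sa (fvf f) (2*0+1) = fvf f 0 := by
    rw [show 2*0+1 = 1 from rfl, Sa_even (fvf f) 0, show 2*0 = 0 from rfl, Sa_zero]; ring
  omega

lemma Sa_odd_ub (hf : StrictMono f)
    (hsum : ∑ j : Fin (2*m+1), (-1 : ℤ) ^ (j : ℕ) * ((f j : ℕ) : ℤ) = (l : ℤ))
    (i : ℕ) (hi : i ≤ m) : Sa (fvf f) (2*i+1) + ((m - i : ℕ) : ℤ) ≤ l := by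
  have := P_mono (fvf f) m (fvf_mono hf) (m - i) i (by omega)
  rw [show i + (m - i) = m by omega] at this
  rw [sum_eq_Sa] at hsum
  omega

lemma Sa_even_ub (hf : StrictMono f) (i : ℕ) (hi : i ≤ m) :
    Sa (fvf f) (2*i) + (i : ℤ) ≤ 0 := by
  have := Q_mono (fvf f) m (fvf_mono hf) i 0 (by omega)
  simp only [Nat.zero_add, show 2*0 = 0 from rfl, Sa_zero] at this
  omega

lemma Sa_even_lb (hf : StrictMono f) (i : ℕ) (hi : i ≤ m) :
    Sa (fvf f) (2*m) + ((m - i : ℕ) : ℤ) ≤ Sa (fvf f) (2*i) := by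
  have hQ := Q_mono (fvf f) m (fvf_mono hf) (m - i) i (by omega)
  rw [show i + (m - i) = m by omega] at hQ
  exact hQ

lemma Sa_2m (hf : StrictMono f)
    (hsum : ∑ j : Fin (2*m+1), (-1 : ℤ) ^ (j : ℕ) * ((f j : ℕ) : ℤ) = (l : ℤ)) :
    -Sa (fvf f) (2*m) ≤ (N : ℤ) - 1 - l := by
  rw [sum_eq_Sa] at hsum
  have h1 : Sa (fvf f) (2*m+1) = Sa (fvf f) (2*m) + fvf f (2*m) := Sa_even (fvf f) m
  have h2 : fvf f (2*m) < N := by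
    simp only [fvf, dif_pos (by omega : 2*m < 2*m+1)]
    exact (f _).isLt
  omega

lemma gmem (hf : StrictMono f)
    (hsum : ∑ j : Fin (2*m+1), (-1 : ℤ) ^ (j : ℕ) * ((f j : ℕ) : ℤ) = (l : ℤ))
    (i : ℕ) (hi : i < m) : (Sa (fvf f) (2*i+1)).toNat < l := by
  have h1 := Sa_odd_lb hf i (by omega)
  have h2 := Sa_odd_ub hf hsum i (by omega)
  have : (1 : ℤ) ≤ ((m - i : ℕ) : ℤ) := by omega
  omega

lemma hmem (hf : StrictMono f)
    (hsum : ∑ j : Fin (2*m+1), (-1 : ℤ) ^ (j : ℕ) * ((f j : ℕ) : ℤ) = (l : ℤ))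
    (i : ℕ) (hi : i < m) : (-Sa (fvf f) (2*(i+1)) - 1).toNat < N - l - 1 := by
  have h1 := Sa_even_ub hf (i+1) (by omega)
  have h2 := Sa_even_lb hf (i+1) (by omega)
  have h3 := Sa_2m (f := f) (l := l) hf hsum
  omega

end KeyFacts

section Builder

/-- The built sequence from two tuples. -/
def bfn (m l : ℕ) (gv hv : ℕ → ℕ) (j : ℕ) : ℕ :=
  (if j/2 < m then gv (j/2) else l) + (if (j+1)/2 = 0 then 0 else hv ((j+1)/2 - 1) + 1)

lemma bfn_even (m l : ℕ) (gv hv : ℕ → ℕ) (i : ℕ) :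
    bfn m l gv hv (2*i) =
      (if i < m then gv i else l) + (if i = 0 then 0 else hv (i-1) + 1) := by
  have e1 : 2*i/2 = i := by omega
  have e2 : (2*i+1)/2 = i := by omega
  simp only [bfn, e1, e2]

lemma bfn_odd (m l : ℕ) (gv hv : ℕ → ℕ) (i : ℕ) :
    bfn m l gv hv (2*i+1) = (if i < m then gv i else l) + (hv i + 1) := by
  have e1 : (2*i+1)/2 = i := by omega
  have e2 : (2*i+1+1)/2 = i+1 := by omega
  simp only [bfn, e1, e2, Nat.succ_ne_zero, if_false, Nat.add_sub_cancel]

lemma Sa_bfn (m l : ℕ) (gv hv : ℕ → ℕ) (i : ℕ) :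
    Sa (bfn m l gv hv) (2*i+1) = ((if i < m then gv i else l : ℕ) : ℤ) := by
  have := altsum (fun t => ((if t < m then gv t else l : ℕ) : ℤ))
    (fun t => ((if t = 0 then 0 else hv (t-1) + 1 : ℕ) : ℤ)) i
  rw [Sa]
  rw [Finset.sum_congr rfl (fun j _ => by
    have : ((bfn m l gv hv j : ℕ) : ℤ) =
        ((if j/2 < m then gv (j/2) else l : ℕ) : ℤ) +
        ((if (j+1)/2 = 0 then 0 else hv ((j+1)/2 - 1) + 1 : ℕ) : ℤ) := by
      simp [bfn]
    rw [this])]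
  rw [this]
  simp

lemma Sa_bfn_even (m l : ℕ) (gv hv : ℕ → ℕ) (i : ℕ) (hi : i < m) :
    Sa (bfn m l gv hv) (2*(i+1)) = -((hv i : ℤ) + 1) := by
  have h1 : Sa (bfn m l gv hv) (2*i+2) = Sa (bfn m l gv hv) (2*i+1) - bfn m l gv hv (2*i+1) :=
    Sa_odd _ i
  rw [show 2*(i+1) = 2*i+2 by ring, h1, Sa_bfn, bfn_odd, if_pos hi]
  push_cast
  ring

lemma bfn_lt (m l N : ℕ) (gv hv : ℕ → ℕ) (hlN : l + 1 ≤ N)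
    (hgl : ∀ t, t < m → gv t < l) (hhl : ∀ t, t < m → hv t < N - l - 1)
    (j : ℕ) (hj : j < 2*m+1) : bfn m l gv hv j < N := by
  rcases Nat.even_or_odd j with ⟨i, rfl⟩ | ⟨i, rfl⟩
  · rw [show i + i = 2*i by ring, bfn_even]
    have h1 : i ≤ m := by omega
    have hg : (if i < m then gv i else l) ≤ l := by
      split_ifs with h
      · exact le_of_lt (hgl i h)
      · exact le_refl l
    have hh : (if i = 0 then 0 else hv (i-1) + 1) ≤ N - l - 1 := by
      split_ifs with h
      · omega
      · have := hhl (i-1) (by omega)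
        omega
    omega
  · rw [bfn_odd]
    have h1 : i < m := by omega
    rw [if_pos h1]
    have := hgl i h1
    have := hhl i h1
    omega

lemma bfn_step (m l : ℕ) (gv hv : ℕ → ℕ)
    (hgm : ∀ a b, a < b → b < m → gv a < gv b) (hgl : ∀ t, t < m → gv t < l)
    (hhm : ∀ a b, a < b → b < m → hv a < hv b)
    (j : ℕ) (hj : j + 1 < 2*m+1) : bfn m l gv hv j < bfn m l gv hv (j+1) := by
  rcases Nat.even_or_odd j with ⟨i, rfl⟩ | ⟨i, rfl⟩
  · rw [show i + i = 2*i by ring] at *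
    rw [bfn_even, bfn_odd]
    have h1 : i < m := by omega
    rw [if_pos h1]
    split_ifs with h2
    · omega
    · have := hhm (i-1) i (by omega) h1
      omega
  · rw [show 2*i+1+1 = 2*(i+1) by ring, bfn_odd, bfn_even]
    have h1 : i < m := by omega
    rw [if_pos h1, if_neg (by omega : ¬ (i+1 = 0)), Nat.add_sub_cancel]
    split_ifs with h2
    · have := hgm i (i+1) (by omega) h2
      omega
    · have := hgl i h1
      omega

end Builder

lemma Sa_congr (w1 w2 : ℕ → ℕ) (n : ℕ) (h : ∀ j, j < n → w1 j = w2 j) :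
    Sa w1 n = Sa w2 n := by
  refine Finset.sum_congr rfl fun j hj => ?_
  rw [h j (Finset.mem_range.mp hj)]

def gvOf {m l : ℕ} (g : Fin m → Fin l) (t : ℕ) : ℕ :=
  if ht : t < m then (g ⟨t, ht⟩ : ℕ) else 0

lemma gvOf_lt {m l : ℕ} (g : Fin m → Fin l) (t : ℕ) (ht : t < m) : gvOf g t < l := by
  simp only [gvOf, dif_pos ht]
  exact (g ⟨t, ht⟩).isLt

lemma gvOf_mono {m l : ℕ} {g : Fin m → Fin l} (hg : StrictMono g) :
    ∀ a b, a < b → b < m → gvOf g a < gvOf g b := by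
  intro a b hab hb
  simp only [gvOf, dif_pos hb, dif_pos (lt_trans hab hb)]
  exact hg (by simp [Fin.lt_def, hab])

def Bmap (m N l : ℕ) (hlN : l + 1 ≤ N)
    (p : (Fin m → Fin l) × (Fin m → Fin (N-l-1))) : Fin (2*m+1) → Fin N :=
  fun j => ⟨bfn m l (gvOf p.1) (gvOf p.2) j.val,
    bfn_lt m l N _ _ hlN (fun t ht => gvOf_lt p.1 t ht) (fun t ht => gvOf_lt p.2 t ht)
      j.val j.isLt⟩


lemma card_filter_strictMono (a b : ℕ) :
    ((univ : Finset (Fin a → Fin b)).filter (fun f => StrictMono f)).card = b.choose a := by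
  have h1 : (powersetCard a (univ : Finset (Fin b))).card = b.choose a := by
    simp [card_powersetCard]
  rw [← h1]
  refine card_bij' (fun f _ => image f univ)
    (fun s hs => ⇑(s.orderEmbOfFin (by simpa using (mem_powersetCard_univ.mp hs))))
    ?_ ?_ ?_ ?_
  · intro f hf
    simp only [mem_filter, mem_univ, true_and] at hf
    simp [mem_powersetCard_univ, card_image_of_injective _ hf.injective]
  · intro s hs
    simp only [mem_filter, mem_univ, true_and]
    exact (s.orderEmbOfFin _).strictMono
  · intro f hf
    simp only [mem_filter, mem_univ, true_and] at hf
    exact (Finset.orderEmbOfFin_unique _ (fun x => mem_image_of_mem f (mem_univ x)) hf).symm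
  · intro s hs
    have := Finset.range_orderEmbOfFin s (by simpa using (mem_powersetCard_univ.mp hs))
    ext x
    simp only [mem_image, mem_univ, true_and]
    rw [show (∃ i, (s.orderEmbOfFin _) i = x) ↔ x ∈ Set.range ⇑(s.orderEmbOfFin _) from Iff.rfl, this]
    simp


lemma left_key {m N l : ℕ} {f : Fin (2*m+1) → Fin N} (hmono : StrictMono f)
    (hsum : ∑ j : Fin (2*m+1), (-1 : ℤ) ^ (j : ℕ) * ((f j : ℕ) : ℤ) = (l : ℤ))
    (gv hv : ℕ → ℕ)
    (hgv : ∀ t, t < m → gv t = (Sa (fvf f) (2*t+1)).toNat)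
    (hhv : ∀ t, t < m → hv t = (-Sa (fvf f) (2*(t+1)) - 1).toNat)
    (n : ℕ) (hn : n < 2*m+1) : bfn m l gv hv n = fvf f n := by
  have hsum' : Sa (fvf f) (2*m+1) = (l : ℤ) := by rw [← sum_eq_Sa]; exact hsum
  rcases Nat.even_or_odd n with ⟨i, hi⟩ | ⟨i, hi⟩
  · have hi' : n = 2*i := by omega
    subst hi'
    rw [bfn_even]
    have hib : i ≤ m := by omega
    have hSe := Sa_even (fvf f) i
    have hlb := Sa_odd_lb hmono i hib
    have heu := Sa_even_ub hmono i hib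
    by_cases him : i < m
    · rw [if_pos him, hgv i him]
      by_cases hi0 : i = 0
      · subst hi0
        rw [if_pos rfl]
        have h0' : Sa (fvf f) (2*0) = 0 := by
          rw [show 2*0 = 0 from rfl]; exact Sa_zero _
        omega
      · rw [if_neg hi0, hhv (i-1) (by omega), show (i-1)+1 = i by omega]
        omega
    · have him' : i = m := by omega
      subst him'
      rw [if_neg (lt_irrefl i)]
      by_cases hi0 : i = 0
      · rw [if_pos hi0]
        have h0' : Sa (fvf f) (2*i) = 0 := by
          rw [show 2*i = 0 by omega]; exact Sa_zero _
        omega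
      · rw [if_neg hi0, hhv (i-1) (by omega), show (i-1)+1 = i by omega]
        omega
  · have hi' : n = 2*i+1 := by omega
    subst hi'
    have him : i < m := by omega
    rw [bfn_odd, if_pos him, hgv i him, hhv i him]
    have hlb := Sa_odd_lb hmono i (by omega)
    have heu := Sa_even_ub hmono (i+1) (by omega)
    have hSo : Sa (fvf f) (2*(i+1)) = Sa (fvf f) (2*i+1) - fvf f (2*i+1) := by
      rw [show 2*(i+1) = 2*i+2 by ring]; exact Sa_odd (fvf f) i
    omega


lemma key (N m l : ℕ) (hlN : l + 1 ≤ N) :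
    ((univ : Finset (Fin (2*m+1) → Fin N)).filter (fun f : Fin (2*m+1) → Fin N =>
        StrictMono f ∧ ∑ j : Fin (2*m+1), (-1 : ℤ) ^ (j : ℕ) * ((f j : ℕ) : ℤ) = (l : ℤ))).card
      = Nat.choose l m * Nat.choose (N - l - 1) m := by
  rw [← card_filter_strictMono m l, ← card_filter_strictMono m (N-l-1), ← Finset.card_product]
  refine Finset.card_bij'
    (fun f hf =>
      ((fun t : Fin m => (⟨(Sa (fvf f) (2*(t:ℕ)+1)).toNat,
          gmem (Finset.mem_filter.mp hf).2.1 (Finset.mem_filter.mp hf).2.2 t t.isLt⟩ : Fin l)),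
       (fun t : Fin m => (⟨(-Sa (fvf f) (2*((t:ℕ)+1)) - 1).toNat,
          hmem (Finset.mem_filter.mp hf).2.1 (Finset.mem_filter.mp hf).2.2 t t.isLt⟩ :
            Fin (N-l-1)))))
    (fun p _ => Bmap m N l hlN p) ?_ ?_ ?_ ?_
  · -- forward image lands in target
    intro f hf
    obtain ⟨-, hmono, hsum⟩ := Finset.mem_filter.mp hf
    rw [Finset.mem_product]
    constructor
    · rw [Finset.mem_filter]
      refine ⟨Finset.mem_univ _, fun a b hab => ?_⟩
      rw [Fin.lt_def] at hab ⊢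
      simp only
      have h1 := P_mono (fvf f) m (fvf_mono hmono) ((b:ℕ) - a) a (by omega)
      rw [show (a:ℕ) + ((b:ℕ) - (a:ℕ)) = (b:ℕ) by omega] at h1
      have h2 := Sa_odd_lb hmono a (by omega)
      omega
    · rw [Finset.mem_filter]
      refine ⟨Finset.mem_univ _, fun a b hab => ?_⟩
      rw [Fin.lt_def] at hab ⊢
      simp only
      have h1 := Q_mono (fvf f) m (fvf_mono hmono) ((b:ℕ) - a) ((a:ℕ)+1) (by omega)
      rw [show (a:ℕ) + 1 + ((b:ℕ) - (a:ℕ)) = (b:ℕ) + 1 by omega] at h1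
      have h2 := Sa_even_ub hmono ((a:ℕ)+1) (by omega)
      have h3 := Sa_even_ub hmono ((b:ℕ)+1) (by omega)
      omega
  · -- backward image lands in source
    intro p hp
    rw [Finset.mem_product] at hp
    obtain ⟨hp1, hp2⟩ := hp
    rw [Finset.mem_filter] at hp1 hp2
    rw [Finset.mem_filter]
    refine ⟨Finset.mem_univ _, ?_, ?_⟩
    · rw [Fin.strictMono_iff_lt_succ]
      intro t
      rw [Fin.lt_def]
      simp only [Bmap, Fin.coe_castSucc, Fin.val_succ]
      exact bfn_step m l _ _ (gvOf_mono hp1.2) (fun u hu => gvOf_lt p.1 u hu)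
        (gvOf_mono hp2.2) t.val (by omega)
    · have heq : ∑ j : Fin (2*m+1), (-1:ℤ)^(j:ℕ) * ((Bmap m N l hlN p j : ℕ) : ℤ)
          = Sa (bfn m l (gvOf p.1) (gvOf p.2)) (2*m+1) := by
        rw [Sa, ← Fin.sum_univ_eq_sum_range
          (fun t => (-1:ℤ)^t * ((bfn m l (gvOf p.1) (gvOf p.2) t : ℕ) : ℤ)) (2*m+1)]
        rfl
      rw [heq, Sa_bfn, if_neg (lt_irrefl m)]
  · -- left inverse
    intro f hf
    obtain ⟨-, hmono, hsum⟩ := Finset.mem_filter.mp hf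
    funext j
    apply Fin.ext
    show bfn m l _ _ (j : ℕ) = (f j : ℕ)
    have hfv : ((f j : ℕ)) = fvf f (j : ℕ) := by simp [fvf, j.isLt]
    rw [hfv]
    exact left_key hmono hsum _ _
      (fun t ht => by simp [gvOf, ht])
      (fun t ht => by simp [gvOf, ht])
      (j : ℕ) j.isLt
  · -- right inverse
    intro p hp
    have hagree : ∀ j, j < 2*m+1 →
        fvf (Bmap m N l hlN p) j = bfn m l (gvOf p.1) (gvOf p.2) j := by
      intro j hj
      simp [fvf, hj, Bmap]
    apply Prod.ext
    · funext t
      apply Fin.ext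
      show (Sa (fvf (Bmap m N l hlN p)) (2*(t:ℕ)+1)).toNat = ((p.1 t : ℕ))
      rw [Sa_congr _ (bfn m l (gvOf p.1) (gvOf p.2)) _ (fun j hj => hagree j (by omega)),
        Sa_bfn, if_pos t.isLt]
      simp [gvOf, t.isLt]
    · funext t
      apply Fin.ext
      show (-Sa (fvf (Bmap m N l hlN p)) (2*((t:ℕ)+1)) - 1).toNat = ((p.2 t : ℕ))
      rw [Sa_congr _ (bfn m l (gvOf p.1) (gvOf p.2)) _ (fun j hj => hagree j (by omega)),
        Sa_bfn_even m l _ _ t.val t.isLt]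
      simp [gvOf, t.isLt]

/-- `#D_{2k-1}(l) = C(l, k-1) · C(N-l-1, k-1)`. -/
theorem stmt_7 (N k l : ℕ) (hN : 1 ≤ N) (hk : 1 ≤ k) (hl : l ≤ N - 1) :
    (Finset.univ.filter (fun f : Fin (2 * k - 1) → Fin N =>
        StrictMono f ∧
          ∑ j : Fin (2 * k - 1), (-1 : ℤ) ^ (j : ℕ) * ((f j : ℕ) : ℤ) = (l : ℤ))).card
      = Nat.choose l (k - 1) * Nat.choose (N - l - 1) (k - 1) := by
  obtain ⟨m, rfl⟩ : ∃ m, k = m + 1 := ⟨k - 1, by omega⟩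
  have h2 : 2 * (m + 1) - 1 = 2 * m + 1 := by omega
  have h3 : m + 1 - 1 = m := by omega
  rw [h3]
  rw [show (2 * (m + 1) - 1) = 2 * m + 1 from h2]
  exact key N m l (by omega)
end

section
/- The expansion F^E[u](z) = I + Σ_{l=0}^{N-1} E_N(-2l, z) · Σ_{d=1}^{N} (1/N)^d Σ_{(n_1,...,n_d) ∈ D_d(l)} U_{n_d}···U_{n_1} holds, where the ordered product over strictly increasing multi-indices is stratified by the alternating sum l = n_d - n_{d-1} + ... + (-1)^{d-1} n_1. -/
open Complex Matrix Finset

noncomputable def ENmat (N : ℕ) (n : ℤ) (z : ℝ) : Matrix (Fin 2) (Fin 2) ℂ :=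
  !![Complex.exp (Real.pi * I * n * z / N), 0; 0, Complex.exp (-(Real.pi * I * n * z / N))]

def Umat (w : ℂ) : Matrix (Fin 2) (Fin 2) ℂ := !![0, w; -(starRingEnd ℂ) w, 0]

noncomputable def LG (N : ℕ) (u : ℕ → ℂ) (n : ℕ) (z : ℝ) : Matrix (Fin 2) (Fin 2) ℂ :=
  ENmat N (-2 * n) z * Umat (u n)

noncomputable def FE (N : ℕ) (u : ℕ → ℂ) (z : ℝ) : Matrix (Fin 2) (Fin 2) ℂ :=
  ((List.range N).reverse.map (fun n => (1 : Matrix (Fin 2) (Fin 2) ℂ) + (1 / N : ℂ) • LG N u n z)).prod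

set_option linter.unusedTactic false
set_option linter.unreachableTactic false

lemma ENmat_zero (N : ℕ) (z : ℝ) : ENmat N 0 z = 1 := by
  simp [ENmat, Matrix.one_fin_two]

lemma ENmat_mul (N : ℕ) (a b : ℤ) (z : ℝ) :
    ENmat N a z * ENmat N b z = ENmat N (a + b) z := by
  ext i j
  fin_cases i <;> fin_cases j <;>
    simp [ENmat, Matrix.mul_apply, Fin.sum_univ_two, ← Complex.exp_add] <;>
    congr 1 <;> push_cast <;> ring

lemma ENmat_comm_U (N : ℕ) (a : ℤ) (z : ℝ) (w : ℂ) :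
    ENmat N a z * Umat w = Umat w * ENmat N (-a) z := by
  ext i j
  fin_cases i <;> fin_cases j <;>
    simp [ENmat, Umat, Matrix.mul_apply, Fin.sum_univ_two] <;> ring_nf

lemma U_comm_ENmat (N : ℕ) (a : ℤ) (z : ℝ) (w : ℂ) :
    Umat w * ENmat N a z = ENmat N (-a) z * Umat w := by
  rw [ENmat_comm_U, neg_neg]

/-- Alternating sum of a list, head counted positively. -/
def altL : List ℕ → ℤ
  | [] => 0
  | a :: t => (a : ℤ) - altL t

lemma prod_one_add {R : Type*} [Ring R] (A : ℕ → R) (l : List ℕ) :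
    (l.map (fun n => 1 + A n)).prod
      = (l.sublists'.map (fun t => (t.map A).prod)).sum := by
  induction l with
  | nil => simp
  | cons a l ih =>
      simp only [List.map_cons, List.prod_cons, ih, List.sublists'_cons, List.map_append,
        List.sum_append, List.map_map]
      rw [add_mul, one_mul]
      congr 1
      rw [← List.sum_map_mul_left]
      congr 1

lemma prod_map_smul (c : ℂ) (A : ℕ → Matrix (Fin 2) (Fin 2) ℂ) (t : List ℕ) :
    (t.map (fun n => c • A n)).prod = c ^ t.length • (t.map A).prod := by
  induction t with
  | nil => simp
  | cons a t ih => simp [ih, smul_smul, Matrix.smul_mul, Matrix.mul_smul, pow_succ, mul_comm]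

lemma prod_LG (N : ℕ) (u : ℕ → ℂ) (z : ℝ) (t : List ℕ) :
    (t.map (fun n => LG N u n z)).prod
      = ENmat N (-2 * altL t) z * (t.map (fun n => Umat (u n))).prod := by
  induction t with
  | nil => simp [altL, ENmat_zero]
  | cons a t ih =>
      rw [List.map_cons, List.prod_cons, ih, LG, mul_assoc, ← mul_assoc (Umat (u a)),
        U_comm_ENmat, mul_assoc, ← mul_assoc, ENmat_mul]
      congr 2
      simp [altL]
      ring

lemma altL_append_singleton (t : List ℕ) (a : ℕ) :
    altL (t ++ [a]) = altL t + (-1) ^ t.length * a := by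
  induction t with
  | nil => simp [altL]
  | cons b t ih =>
      simp only [List.cons_append, altL, List.append_eq]
      rw [ih, List.length_cons, pow_succ]
      ring

lemma altL_reverse (l : List ℕ) :
    altL l.reverse = ∑ j : Fin l.length, (-1 : ℤ) ^ (l.length - 1 - (j : ℕ)) * (l.get j : ℤ) := by
  induction l with
  | nil => simp [altL]
  | cons a l ih =>
      rw [List.reverse_cons, altL_append_singleton, ih]
      simp only [List.length_cons]
      rw [Fin.sum_univ_succ, add_comm]
      congr 1
      · simp
      · apply Finset.sum_congr rfl
        intro j _
        simp only [List.get_cons_succ, Fin.val_succ]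
        congr 2
        omega

lemma altL_bounds (a : ℕ) (t : List ℕ) (h : (a :: t).Pairwise (· > ·)) :
    0 ≤ altL (a :: t) ∧ altL (a :: t) ≤ a := by
  induction t generalizing a with
  | nil => simp [altL]
  | cons b t ih =>
      have hb : b < a := by
        have := List.pairwise_cons.1 h
        exact this.1 b (by simp)
      have h' : (b :: t).Pairwise (· > ·) := (List.pairwise_cons.1 h).2
      obtain ⟨h1, h2⟩ := ih b h'
      simp only [altL] at h1 h2 ⊢
      omega

lemma altL_reverse_ofFn {d : ℕ} (g : Fin d → ℕ) :
    altL (List.ofFn g).reverse = ∑ j : Fin d, (-1 : ℤ) ^ (d - 1 - (j : ℕ)) * (g j : ℤ) := by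
  rw [altL_reverse,
    ← Fin.sum_congr' (fun j : Fin d => (-1 : ℤ) ^ (d - 1 - (j : ℕ)) * (g j : ℤ))
      (List.length_ofFn (f := g))]
  apply Finset.sum_congr rfl
  intro j _
  simp [List.get_ofFn]
  congr

lemma altF_bounds {N d : ℕ} (hd : 1 ≤ d) (f : Fin d → Fin N) (hf : StrictMono f) :
    0 ≤ (∑ j : Fin d, (-1 : ℤ) ^ (d - 1 - (j : ℕ)) * ((f j : ℕ) : ℤ)) ∧
    (∑ j : Fin d, (-1 : ℤ) ^ (d - 1 - (j : ℕ)) * ((f j : ℕ) : ℤ)) < N := by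
  have h1 := altL_reverse_ofFn (fun j => ((f j : ℕ)))
  set s : List ℕ := List.ofFn (fun j => ((f j : ℕ))) with hs
  have hp : s.reverse.Pairwise (· > ·) := by
    rw [List.pairwise_reverse]
    simp only [hs, List.pairwise_ofFn]
    intro i j hij
    exact hf hij
  have hne : s.reverse ≠ [] := by
    simp only [ne_eq, List.reverse_eq_nil_iff, hs, List.ofFn_eq_nil_iff]
    omega
  obtain ⟨a, t, hat⟩ := List.exists_cons_of_ne_nil hne
  have haN : a < N := by
    have ha : a ∈ s := by
      rw [← List.mem_reverse, hat]; simp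
    rw [hs, List.mem_ofFn] at ha
    obtain ⟨j, hj⟩ := ha
    simpa [← hj] using (f j).isLt
  have hb := altL_bounds a t (hat ▸ hp)
  rw [← h1, hat]
  exact ⟨hb.1, lt_of_le_of_lt hb.2 (by exact_mod_cast haN)⟩

lemma sublist_range_of_sorted {N : ℕ} {s : List ℕ} (hs : s.Pairwise (· < ·))
    (hN : ∀ x ∈ s, x < N) : List.Sublist s (List.range N) := by
  apply List.sublist_of_subperm_of_pairwise (r := (· ≤ ·))
  · exact List.subperm_of_subset hs.nodup (fun x hx => List.mem_range.2 (hN x hx))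
  · exact List.Pairwise.imp le_of_lt hs
  · exact List.pairwise_le_range (n := N)

/-- Stratified expansion of `F^E[u](z)` over the strata `D_d(l)` given by the alternating sum;
the inner matrix product `U_{n_d}···U_{n_1}` is taken in decreasing index order. -/
theorem stmt_18 (N : ℕ) (hN : 1 ≤ N) (u : ℕ → ℂ) (z : ℝ) :
    FE N u z
      = 1 + ∑ l ∈ Finset.range N, ENmat N (-2 * l) z *
          ∑ d ∈ Finset.Icc 1 N, ((1 / N : ℂ) ^ d) •
            ∑ f ∈ Finset.univ.filter (fun f : Fin d → Fin N =>
                StrictMono f ∧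
                  ∑ j : Fin d, (-1 : ℤ) ^ (d - 1 - (j : ℕ)) * ((f j : ℕ) : ℤ) = (l : ℤ)),
              ((List.ofFn (fun j : Fin d => Umat (u (f j)))).reverse).prod := by
  classical
  -- abbreviations
  set c : ℂ := (1 / N : ℂ) with hc
  -- Step A : rewrite the right-hand side as a single sigma-indexed sum
  have stepA :
      (∑ l ∈ Finset.range N, ENmat N (-2 * l) z *
          ∑ d ∈ Finset.Icc 1 N, (c ^ d) •
            ∑ f ∈ Finset.univ.filter (fun f : Fin d → Fin N =>
                StrictMono f ∧
                  ∑ j : Fin d, (-1 : ℤ) ^ (d - 1 - (j : ℕ)) * ((f j : ℕ) : ℤ) = (l : ℤ)),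
              ((List.ofFn (fun j : Fin d => Umat (u (f j)))).reverse).prod)
        = ∑ d ∈ Finset.Icc 1 N, ∑ f ∈ Finset.univ.filter
              (fun f : Fin d → Fin N => StrictMono f),
            c ^ d • (ENmat N
                (-2 * ∑ j : Fin d, (-1 : ℤ) ^ (d - 1 - (j : ℕ)) * ((f j : ℕ) : ℤ)) z *
              ((List.ofFn (fun j : Fin d => Umat (u (f j)))).reverse).prod) := by
    rw [show (∑ l ∈ Finset.range N, ENmat N (-2 * l) z *
          ∑ d ∈ Finset.Icc 1 N, (c ^ d) •
            ∑ f ∈ Finset.univ.filter (fun f : Fin d → Fin N =>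
                StrictMono f ∧
                  ∑ j : Fin d, (-1 : ℤ) ^ (d - 1 - (j : ℕ)) * ((f j : ℕ) : ℤ) = (l : ℤ)),
              ((List.ofFn (fun j : Fin d => Umat (u (f j)))).reverse).prod)
        = ∑ l ∈ Finset.range N, ∑ d ∈ Finset.Icc 1 N,
            ∑ f ∈ Finset.univ.filter (fun f : Fin d → Fin N =>
                StrictMono f ∧
                  ∑ j : Fin d, (-1 : ℤ) ^ (d - 1 - (j : ℕ)) * ((f j : ℕ) : ℤ) = (l : ℤ)),
              c ^ d • (ENmat N
                  (-2 * ∑ j : Fin d, (-1 : ℤ) ^ (d - 1 - (j : ℕ)) * ((f j : ℕ) : ℤ)) z *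
                ((List.ofFn (fun j : Fin d => Umat (u (f j)))).reverse).prod) from ?_]
    · rw [Finset.sum_comm]
      refine Finset.sum_congr rfl fun d hd => ?_
      have hd1 : 1 ≤ d := (Finset.mem_Icc.1 hd).1
      have hmaps : ∀ f ∈ Finset.univ.filter (fun f : Fin d → Fin N => StrictMono f),
          (∑ j : Fin d, (-1 : ℤ) ^ (d - 1 - (j : ℕ)) * ((f j : ℕ) : ℤ)).toNat ∈
            Finset.range N := by
        intro f hf
        have hm := (Finset.mem_filter.1 hf).2
        obtain ⟨hb1, hb2⟩ := altF_bounds hd1 f hm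
        exact Finset.mem_range.2 ((Int.toNat_lt hb1).2 hb2)
      rw [← Finset.sum_fiberwise_of_maps_to hmaps]
      refine Finset.sum_congr rfl fun l hl => ?_
      apply Finset.sum_congr ?_ fun f _ => rfl
      ext f
      simp only [Finset.mem_filter, Finset.mem_univ, true_and]
      constructor
      · rintro ⟨hm, he⟩
        refine ⟨hm, ?_⟩
        rw [he, Int.toNat_natCast]
      · rintro ⟨hm, he⟩
        have hb := (altF_bounds hd1 f hm).1
        refine ⟨hm, ?_⟩
        rw [← he, Int.toNat_of_nonneg hb]
    · refine Finset.sum_congr rfl fun l _ => ?_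
      rw [Finset.mul_sum]
      refine Finset.sum_congr rfl fun d _ => ?_
      rw [Matrix.mul_smul, Finset.mul_sum, Finset.smul_sum]
      refine Finset.sum_congr rfl fun f hf => ?_
      have he := (Finset.mem_filter.1 hf).2.2
      rw [he]
  rw [stepA]
  -- Step B : expand the product on the left-hand side
  have nd : ((List.range N).reverse.sublists').Nodup :=
    (List.nodup_sublists'.2 (List.nodup_reverse.2 (List.nodup_range (n := N))))
  rw [FE, prod_one_add (fun n => c • LG N u n z), ← List.sum_toFinset _ nd]
  have hg : ∀ t : List ℕ, ((t.map fun n => c • LG N u n z).prod)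
      = c ^ t.length • (ENmat N (-2 * altL t) z * (t.map fun n => Umat (u n)).prod) := by
    intro t
    rw [prod_map_smul, prod_LG]
  rw [Finset.sum_congr rfl fun t _ => hg t]
  have hempty : ([] : List ℕ) ∈ ((List.range N).reverse.sublists').toFinset := by
    simp only [List.mem_toFinset, List.mem_sublists']
    exact List.nil_sublist _
  rw [← Finset.add_sum_erase _ _ hempty]
  have h0 : (c ^ ([] : List ℕ).length •
      (ENmat N (-2 * altL []) z * (([] : List ℕ).map fun n => Umat (u n)).prod)) = 1 := by
    simp [altL, ENmat_zero]
  rw [h0]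
  congr 1
  -- Step C : bijection between nonempty decreasing sublists and (d, strictly monotone f)
  rw [Finset.sum_sigma']
  refine (Finset.sum_bij'
    (i := fun (p : Σ d : ℕ, (Fin d → Fin N)) (_ : p ∈ (Finset.Icc 1 N).sigma
        (fun d => Finset.univ.filter (fun f : Fin d → Fin N => StrictMono f))) =>
      (List.ofFn (fun k : Fin p.1 => ((p.2 k : ℕ)))).reverse)
    (j := fun (t : List ℕ) (ht : t ∈ (((List.range N).reverse.sublists').toFinset).erase []) =>
      (⟨t.length, fun k : Fin t.length =>
        (⟨t.reverse.get (Fin.cast (List.length_reverse (as := t)).symm k), by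
          have hsub : List.Sublist t ((List.range N).reverse) := by
            have := (Finset.mem_erase.1 ht).2
            rwa [List.mem_toFinset, List.mem_sublists'] at this
          have hrev : List.Sublist t.reverse (List.range N) := by
            simpa using hsub.reverse
          have : t.reverse.get (Fin.cast (List.length_reverse (as := t)).symm k) ∈ t.reverse :=
            List.mem_iff_get.2 ⟨_, rfl⟩
          exact List.mem_range.1 (hrev.subset this)⟩ : Fin N)⟩ :
        Σ d : ℕ, (Fin d → Fin N)))
    ?_ ?_ ?_ ?_ ?_).symm
  · -- hi : lands in the erased sublists set
    intro p hp
    obtain ⟨hd, hf⟩ := Finset.mem_sigma.1 hp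
    obtain ⟨hd1, hdN⟩ := Finset.mem_Icc.1 hd
    have hm : StrictMono p.2 := (Finset.mem_filter.1 hf).2
    have hsorted : (List.ofFn (fun k : Fin p.1 => ((p.2 k : ℕ)))).Pairwise (· < ·) := by
      rw [List.pairwise_ofFn]
      intro i j hij
      exact hm hij
    have hmem : ∀ x ∈ List.ofFn (fun k : Fin p.1 => ((p.2 k : ℕ))), x < N := by
      intro x hx
      rw [List.mem_ofFn] at hx
      obtain ⟨j, hj⟩ := hx
      simpa [← hj] using (p.2 j).isLt
    have hsub : List.Sublist (List.ofFn (fun k : Fin p.1 => ((p.2 k : ℕ))))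
        (List.range N) := sublist_range_of_sorted hsorted hmem
    refine Finset.mem_erase.2 ⟨?_, ?_⟩
    · simp only [ne_eq, List.reverse_eq_nil_iff, List.ofFn_eq_nil_iff]
      omega
    · rw [List.mem_toFinset, List.mem_sublists']
      simpa using hsub.reverse
  · -- hj : lands in the sigma set
    intro t ht
    have hne : t ≠ [] := (Finset.mem_erase.1 ht).1
    have hsub : List.Sublist t ((List.range N).reverse) := by
      have := (Finset.mem_erase.1 ht).2
      rwa [List.mem_toFinset, List.mem_sublists'] at this
    have hrev : List.Sublist t.reverse (List.range N) := by simpa using hsub.reverse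
    have hptw : t.reverse.Pairwise (· < ·) :=
      (List.pairwise_lt_range (n := N)).sublist hrev
    refine Finset.mem_sigma.2 ⟨Finset.mem_Icc.2 ⟨?_, ?_⟩, ?_⟩
    · show 1 ≤ t.length
      have : t.length ≠ 0 := by simpa using hne
      omega
    · show t.length ≤ N
      simpa using hsub.length_le
    · refine Finset.mem_filter.2 ⟨Finset.mem_univ _, ?_⟩
      intro k₁ k₂ hk
      have := List.pairwise_iff_get.1 hptw
        (Fin.cast (List.length_reverse (as := t)).symm k₁)
        (Fin.cast (List.length_reverse (as := t)).symm k₂) (by simpa using hk)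
      exact this
  · -- left inverse (on the sigma side)
    intro p hp
    refine Sigma.ext ?_ ?_
    · simp
    · rw [Fin.heq_fun_iff (by simp)]
      intro k
      apply Fin.ext
      simp [List.get_ofFn]
  · -- right inverse (on the list side)
    intro t ht
    simp only
    have h1 : (List.ofFn fun k : Fin t.length =>
        t.reverse.get (Fin.cast (List.length_reverse (as := t)).symm k)) = t.reverse := by
      rw [← List.ofFn_congr (List.length_reverse (as := t)) t.reverse.get, List.ofFn_get]
    calc (List.ofFn fun k : Fin t.length =>
        t.reverse.get (Fin.cast (List.length_reverse (as := t)).symm k)).reverse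
        = t.reverse.reverse := by rw [h1]
      _ = t := List.reverse_reverse t
  · -- values agree
    intro p hp
    simp only [List.length_reverse, List.length_ofFn, List.map_reverse, List.map_ofFn]
    rw [← altL_reverse_ofFn (fun k : Fin p.1 => ((p.2 k : ℕ)))]
    rfl
end
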